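/- Let π be a possibility distribution on ℝⁿ satisfying Assumption 1 whose cuts have the form C(λ_i) = {a ∈ ℝⁿ : a̲(λ_i) ≤ a ≤ ā(λ_i), ‖a − â‖_∞ ≤ δ̄(λ_i)} for vectors a̲(λ_i) ≤ â ≤ ā(λ_i) and scalars δ̄(λ_i) ≥ 0, i ∈ Λ. Let ℓ be a positive integer, ε ∈ [0,1), b ∈ ℝ, x ∈ ℝⁿ. Then sup_{P ∈ P_π^ℓ} CVaR_P^ε[ãᵀx] ≤ b holds if and only if there exist w, t ∈ ℝ, reals v_i ≥ 0, and nonnegative vectors α_i, β_i, φ_i, ξ_i, γ_i ∈ ℝ₊ⁿ (i ∈ Λ) such that: w + Σ_{i∈Λ}(λ_i − 1)v_i ≤ (b − t)(1 − ε); w − Σ_{j≤i} v_j ≥ 0 for all i ∈ Λ; w − Σ_{j≤i} v_j + t ≥ ā(λ_i)ᵀα_i − a̲(λ_i)ᵀβ_i + âᵀ(φ_i − ξ_i) + δ̄(λ_i)·Σ_j γ_{ij} for all i ∈ Λ; α_{ij} − β_{ij} + φ_{ij} − ξ_{ij} = x_j for all j ∈ [n], i ∈ Λ; and γ_{ij}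 − φ_{ij} − ξ_{ij} ≥ 0 for all j ∈ [n], i ∈ Λ. -/

import Mathlib

open MeasureTheory Set
open scoped ENNReal

/-- Conditional Value at Risk at level `ε` of the random variable `X` under `P`. -/
noncomputable def cvar {Ω : Type*} [MeasurableSpace Ω] (P : Measure Ω) (ε : ℝ) (X : Ω → ℝ) : ℝ :=
  ⨅ t : ℝ, (t + (1 / (1 - ε)) * ∫ a, max (X a - t) 0 ∂P)

/-- The discrete ambiguity set `P_π^ℓ`. -/
def ambiguitySet (n ℓ : ℕ) (C : ℝ → Set (Fin n → ℝ)) : Set (Measure (Fin n → ℝ)) :=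
  {P | IsProbabilityMeasure P ∧
    ∀ i : Fin (ℓ + 1), ENNReal.ofReal (1 - ((i : ℕ) : ℝ) / ℓ) ≤ P (C (((i : ℕ) : ℝ) / ℓ))}



section AuxLemmas

/-- clamp a natural into `Fin (L+1)` -/
def clp (L : ℕ) (i : ℕ) : Fin (L + 1) := ⟨min i L, by omega⟩

lemma clp_val {L i : ℕ} (h : i ≤ L) : clp L i = (⟨i, by omega⟩ : Fin (L+1)) := by
  simp [clp, Nat.min_eq_left h]

lemma clp_fst (L : ℕ) (i : Fin (L+1)) : clp L i.1 = i := by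
  ext; simp [clp]; omega

lemma abel_aux (w : ℝ) (V : ℕ → ℝ) (L : ℕ) :
    ∑ i ∈ Finset.range L, (w - ∑ j ∈ Finset.range (i+1), V j)
      = L * w + ∑ i ∈ Finset.range (L+1), ((i:ℝ) - L) * V i := by
  induction L with
  | zero => simp
  | succ L ih =>
    rw [Finset.sum_range_succ, ih]
    have h1 : ∑ i ∈ Finset.range (L+1+1), ((i:ℝ) - (L+1)) * V i
        = ∑ i ∈ Finset.range (L+1), ((i:ℝ) - (L+1)) * V i := by
      rw [Finset.sum_range_succ]; simp
    have h2 : ∑ i ∈ Finset.range (L+1), ((i:ℝ) - (L+1:ℕ)) * V i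
        = ∑ i ∈ Finset.range (L+1), (((i:ℝ) - L) * V i - V i) := by
      apply Finset.sum_congr rfl; intro i _; push_cast; ring
    push_cast at h1 h2 ⊢
    rw [h1, h2, Finset.sum_sub_distrib]; ring

lemma telescope_aux (C : ℕ → ℝ) (V : ℕ → ℝ) (hV : ∀ i, V (i+1) = C i - C (i+1))
    (hV0 : V 0 = 0) (k : ℕ) : ∑ j ∈ Finset.range (k+1), V j = C 0 - C k := by
  induction k with
  | zero => simp [hV0]
  | succ k ih => rw [Finset.sum_range_succ, ih, hV k]; ring

lemma sum_Iic_fin {L : ℕ} (f : Fin (L+1) → ℝ) (i : Fin (L+1)) :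
    ∑ j ∈ Finset.Iic i, f j = ∑ j ∈ Finset.range (i.1+1), f (clp L j) := by
  refine Finset.sum_bij' (fun j _ => (j : Fin (L+1)).1) (fun j _ => clp L j) ?_ ?_ ?_ ?_ ?_
  · intro j hj
    simp only [Finset.mem_Iic] at hj
    simp only [Finset.mem_range]
    omega
  · intro j hj
    simp only [Finset.mem_range] at hj
    simp only [Finset.mem_Iic]
    have hjL : j ≤ L := by have := i.2; omega
    rw [clp_val hjL]
    exact Fin.mk_le_of_le_val (by omega)
  · intro j hj; exact clp_fst L j
  · intro j hj
    simp only [Finset.mem_range] at hj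
    have hjL : j ≤ L := by have := i.2; omega
    simp [clp, Nat.min_eq_left hjL]
  · intro j hj; rw [clp_fst]

lemma sum_univ_clp {L : ℕ} (g : Fin (L+1) → ℝ) :
    ∑ i : Fin (L+1), g i = ∑ i ∈ Finset.range (L+1), g (clp L i) := by
  rw [← Fin.sum_univ_eq_sum_range (fun k => g (clp L k)) (L+1)]
  exact Finset.sum_congr rfl fun i _ => by rw [clp_fst]

lemma integrable_dirac_sm {α : Type*} [MeasurableSpace α] {f : α → ℝ}
    (hf : StronglyMeasurable f) (a : α) : Integrable f (Measure.dirac a) := by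
  refine ⟨hf.aestronglyMeasurable, ?_⟩
  have : ∫⁻ x, ‖f x‖₊ ∂(Measure.dirac a) = ‖f a‖₊ :=
    lintegral_dirac' a (by exact hf.measurable.nnnorm.coe_nnreal_ennreal)
  rw [HasFiniteIntegral]
  change ∫⁻ x, (‖f x‖₊ : ℝ≥0∞) ∂(Measure.dirac a) < ⊤
  rw [this]
  exact ENNReal.coe_lt_top

end AuxLemmas

section MinPsi

lemma exists_min_psi (L : ℕ) (hL : 1 ≤ L) (r : ℝ) (hr : 1 ≤ r) (m : ℕ → ℝ) :
    ∃ ts : ℝ, ∀ t : ℝ,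
      ts + r * ((L:ℝ)⁻¹ * ∑ i ∈ Finset.range L, max (m i - ts) 0)
        ≤ t + r * ((L:ℝ)⁻¹ * ∑ i ∈ Finset.range L, max (m i - t) 0) := by
  set ψ : ℝ → ℝ := fun t => t + r * ((L:ℝ)⁻¹ * ∑ i ∈ Finset.range L, max (m i - t) 0) with hψ
  have hLpos : (0:ℝ) < L := by exact_mod_cast hL
  have hne : (Finset.range L).Nonempty := Finset.nonempty_range_iff.mpr (by omega)
  set t0 : ℝ := (Finset.range L).inf' hne m with ht0
  have ht0le : ∀ i ∈ Finset.range L, t0 ≤ m i := fun i hi => Finset.inf'_le m hi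
  have hpsit : ∀ t, t ≤ ψ t := by
    intro t
    have h1 : 0 ≤ ∑ i ∈ Finset.range L, max (m i - t) 0 :=
      Finset.sum_nonneg fun i _ => le_max_right _ _
    have : 0 ≤ r * ((L:ℝ)⁻¹ * ∑ i ∈ Finset.range L, max (m i - t) 0) := by positivity
    simp only [hψ]; linarith
  have hlow : ∀ t ≤ t0, ψ t0 ≤ ψ t := by
    intro t ht
    have hsum : ∀ s : ℝ, s ≤ t0 → ∑ i ∈ Finset.range L, max (m i - s) 0
        = (∑ i ∈ Finset.range L, m i) - L * s := by
      intro s hs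
      rw [show (∑ i ∈ Finset.range L, m i) - (L:ℝ) * s
          = ∑ i ∈ Finset.range L, (m i - s) by
        rw [Finset.sum_sub_distrib, Finset.sum_const, Finset.card_range]; ring]
      refine Finset.sum_congr rfl fun i hi => ?_
      have := ht0le i hi
      exact max_eq_left (by linarith)
    have e1 := hsum t ht
    have e2 := hsum t0 le_rfl
    simp only [hψ, e1, e2]
    have hinv : (L:ℝ)⁻¹ * ((L:ℝ) * t) = t := by field_simp
    have hinv0 : (L:ℝ)⁻¹ * ((L:ℝ) * t0) = t0 := by field_simp
    have expand : ∀ s : ℝ, s + r * ((L:ℝ)⁻¹ * ((∑ i ∈ Finset.range L, m i) - L * s))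
        = s * (1 - r) + r * ((L:ℝ)⁻¹ * ∑ i ∈ Finset.range L, m i) := by
      intro s; field_simp; ring
    rw [expand t, expand t0]
    have : t * (1 - r) ≥ t0 * (1 - r) := by nlinarith
    linarith
  have hcont : Continuous ψ := by
    apply continuous_id.add
    apply continuous_const.mul
    apply continuous_const.mul
    apply continuous_finset_sum
    intro i _
    exact (continuous_const.sub continuous_id).max continuous_const
  set T : ℝ := max t0 (ψ t0) with hT
  have ht0T : t0 ≤ T := le_max_left _ _
  obtain ⟨ts, htsmem, htsmin⟩ :=
    isCompact_Icc.exists_isMinOn (Set.nonempty_Icc.mpr ht0T) hcont.continuousOn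
  refine ⟨ts, fun t => ?_⟩
  have hts0 : ψ ts ≤ ψ t0 := htsmin (Set.mem_Icc.mpr ⟨le_rfl, ht0T⟩)
  rcases le_total t t0 with h | h
  · exact le_trans hts0 (hlow t h)
  · rcases le_total t T with h2 | h2
    · exact htsmin (Set.mem_Icc.mpr ⟨h, h2⟩)
    · have : ψ t0 ≤ t := le_trans (le_max_right t0 (ψ t0)) h2
      exact le_trans hts0 (le_trans this (hpsit t))

end MinPsi

section Box
variable {n L : ℕ}

/-- the maximizer of `aᵀx` over the box-plus-ball cut -/
noncomputable def astr (lo hi : Fin (L+1) → Fin n → ℝ) (d : Fin (L+1) → ℝ)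
    (ahat x : Fin n → ℝ) (i : Fin (L+1)) : Fin n → ℝ :=
  fun j => if 0 ≤ x j then min (hi i j) (ahat j + d i) else max (lo i j) (ahat j - d i)

/-- maximum value of `aᵀx` over the cut -/
noncomputable def Mv (lo hi : Fin (L+1) → Fin n → ℝ) (d : Fin (L+1) → ℝ)
    (ahat x : Fin n → ℝ) (i : Fin (L+1)) : ℝ :=
  ∑ j, astr lo hi d ahat x i j * x j

variable {lo hi : Fin (L+1) → Fin n → ℝ} {d : Fin (L+1) → ℝ} {ahat x : Fin n → ℝ}

lemma astr_mem_box (hlo : ∀ i j, lo i j ≤ ahat j) (hhi : ∀ i j, ahat j ≤ hi i j)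
    (hd : ∀ i, 0 ≤ d i) (i : Fin (L+1)) :
    (∀ j, lo i j ≤ astr lo hi d ahat x i j ∧ astr lo hi d ahat x i j ≤ hi i j) ∧
      (∀ j, |astr lo hi d ahat x i j - ahat j| ≤ d i) := by
  have hd' := hd i
  constructor
  · intro j
    have h1 := hlo i j; have h2 := hhi i j
    unfold astr
    split_ifs
    · exact ⟨le_min (by linarith) (by linarith), min_le_left _ _⟩
    · exact ⟨le_max_left _ _, max_le (by linarith) (by linarith)⟩
  · intro j
    have h1 := hlo i j; have h2 := hhi i j
    unfold astr
    rw [abs_le]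
    split_ifs
    · constructor
      · have : ahat j ≤ min (hi i j) (ahat j + d i) := le_min (by linarith) (by linarith)
        linarith
      · have := min_le_right (hi i j) (ahat j + d i); linarith
    · constructor
      · have := le_max_right (lo i j) (ahat j - d i); linarith
      · have : max (lo i j) (ahat j - d i) ≤ ahat j := max_le (by linarith) (by linarith)
        linarith

lemma box_max (hlo : ∀ i j, lo i j ≤ ahat j) (hhi : ∀ i j, ahat j ≤ hi i j)
    (hd : ∀ i, 0 ≤ d i) (i : Fin (L+1)) (a : Fin n → ℝ)
    (hbox : ∀ j, lo i j ≤ a j ∧ a j ≤ hi i j) (hball : ∀ j, |a j - ahat j| ≤ d i) :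
    ∑ j, a j * x j ≤ Mv lo hi d ahat x i := by
  refine Finset.sum_le_sum fun j _ => ?_
  obtain ⟨hb1, hb2⟩ := hbox j
  obtain ⟨hB1, hB2⟩ := abs_le.mp (hball j)
  unfold astr
  split_ifs with h
  · have : a j ≤ min (hi i j) (ahat j + d i) := le_min hb2 (by linarith)
    exact mul_le_mul_of_nonneg_right this h
  · have : max (lo i j) (ahat j - d i) ≤ a j := max_le hb1 (by linarith)
    have hx : x j ≤ 0 := le_of_not_ge h
    nlinarith

lemma weak_duality (i : Fin (L+1)) (a : Fin n → ℝ)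
    (hbox : ∀ j, lo i j ≤ a j ∧ a j ≤ hi i j) (hball : ∀ j, |a j - ahat j| ≤ d i)
    (hd : 0 ≤ d i)
    (α β φ ξ γ : Fin n → ℝ)
    (hα : ∀ j, 0 ≤ α j) (hβ : ∀ j, 0 ≤ β j) (hφ : ∀ j, 0 ≤ φ j) (hξ : ∀ j, 0 ≤ ξ j)
    (hγ : ∀ j, 0 ≤ γ j)
    (hfeas : ∀ j, α j - β j + φ j - ξ j = x j) (hγc : ∀ j, 0 ≤ γ j - φ j - ξ j) :
    ∑ j, a j * x j ≤
      ∑ j, hi i j * α j - ∑ j, lo i j * β j + ∑ j, ahat j * (φ j - ξ j)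
        + d i * ∑ j, γ j := by
  have key : ∑ j, a j * x j ≤
      ∑ j, (hi i j * α j - lo i j * β j + ahat j * (φ j - ξ j) + d i * γ j) := by
    refine Finset.sum_le_sum fun j _ => ?_
    obtain ⟨hb1, hb2⟩ := hbox j
    obtain ⟨hB1, hB2⟩ := abs_le.mp (hball j)
    have e : a j * x j = a j * α j - a j * β j + a j * φ j - a j * ξ j := by
      rw [← hfeas j]; ring
    have t1 : a j * α j ≤ hi i j * α j := mul_le_mul_of_nonneg_right hb2 (hα j)
    have t2 : lo i j * β j ≤ a j * β j := mul_le_mul_of_nonneg_right hb1 (hβ j)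
    have t3 : (a j - ahat j) * φ j ≤ d i * φ j := mul_le_mul_of_nonneg_right hB2 (hφ j)
    have t4 : -(d i) * ξ j ≤ (a j - ahat j) * ξ j := mul_le_mul_of_nonneg_right hB1 (hξ j)
    have t5 : d i * (φ j + ξ j) ≤ d i * γ j := by
      have := hγc j
      exact mul_le_mul_of_nonneg_left (by linarith) hd
    nlinarith [t1, t2, t3, t4, t5]
  calc ∑ j, a j * x j
      ≤ ∑ j, (hi i j * α j - lo i j * β j + ahat j * (φ j - ξ j) + d i * γ j) := key
    _ = ∑ j, hi i j * α j - ∑ j, lo i j * β j + ∑ j, ahat j * (φ j - ξ j)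
        + d i * ∑ j, γ j := by
      rw [Finset.mul_sum, Finset.sum_add_distrib, Finset.sum_add_distrib,
        Finset.sum_sub_distrib]

end Box

section Dual
variable {n L : ℕ}

noncomputable def dA (hi : Fin (L+1) → Fin n → ℝ) (d : Fin (L+1) → ℝ)
    (ahat x : Fin n → ℝ) (i : Fin (L+1)) (j : Fin n) : ℝ :=
  if 0 ≤ x j then (if hi i j ≤ ahat j + d i then x j else 0) else 0

noncomputable def dPhi (hi : Fin (L+1) → Fin n → ℝ) (d : Fin (L+1) → ℝ)
    (ahat x : Fin n → ℝ) (i : Fin (L+1)) (j : Fin n) : ℝ :=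
  if 0 ≤ x j then (if hi i j ≤ ahat j + d i then 0 else x j) else 0

noncomputable def dB (lo : Fin (L+1) → Fin n → ℝ) (d : Fin (L+1) → ℝ)
    (ahat x : Fin n → ℝ) (i : Fin (L+1)) (j : Fin n) : ℝ :=
  if 0 ≤ x j then 0 else (if ahat j - d i ≤ lo i j then -x j else 0)

noncomputable def dXi (lo : Fin (L+1) → Fin n → ℝ) (d : Fin (L+1) → ℝ)
    (ahat x : Fin n → ℝ) (i : Fin (L+1)) (j : Fin n) : ℝ :=
  if 0 ≤ x j then 0 else (if ahat j - d i ≤ lo i j then 0 else -x j)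

variable {lo hi : Fin (L+1) → Fin n → ℝ} {d : Fin (L+1) → ℝ} {ahat x : Fin n → ℝ}

lemma dual_nonneg (i : Fin (L+1)) (j : Fin n) :
    0 ≤ dA hi d ahat x i j ∧ 0 ≤ dPhi hi d ahat x i j ∧ 0 ≤ dB lo d ahat x i j ∧
      0 ≤ dXi lo d ahat x i j := by
  unfold dA dPhi dB dXi
  refine ⟨?_, ?_, ?_, ?_⟩ <;> (split_ifs with h1 h2 <;> first | rfl | linarith |
    (push_neg at *; linarith))

lemma dual_feas (i : Fin (L+1)) (j : Fin n) :
    dA hi d ahat x i j - dB lo d ahat x i j + dPhi hi d ahat x i j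
      - dXi lo d ahat x i j = x j := by
  unfold dA dPhi dB dXi
  split_ifs with h1 h2 <;> ring

lemma dual_obj (i : Fin (L+1)) :
    ∑ j, hi i j * dA hi d ahat x i j - ∑ j, lo i j * dB lo d ahat x i j
      + ∑ j, ahat j * (dPhi hi d ahat x i j - dXi lo d ahat x i j)
      + d i * ∑ j, (dPhi hi d ahat x i j + dXi lo d ahat x i j)
      = Mv lo hi d ahat x i := by
  have key : ∀ j, hi i j * dA hi d ahat x i j - lo i j * dB lo d ahat x i j
      + ahat j * (dPhi hi d ahat x i j - dXi lo d ahat x i j)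
      + d i * (dPhi hi d ahat x i j + dXi lo d ahat x i j)
      = astr lo hi d ahat x i j * x j := by
    intro j
    unfold dA dPhi dB dXi astr
    split_ifs with h1 h2 h3
    · rw [min_eq_left h2]; ring
    · rw [min_eq_right (le_of_not_ge h2)]; ring
    · rw [max_eq_left h3]; ring
    · rw [max_eq_right (le_of_not_ge h3)]; ring
  unfold Mv
  rw [Finset.mul_sum, ← Finset.sum_sub_distrib]
  rw [← Finset.sum_add_distrib, ← Finset.sum_add_distrib]
  exact Finset.sum_congr rfl fun j _ => key j

end Dual

/-- Linear programming reformulation of the CVaR constraint for cuts given by a box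
together with an `L_∞`-norm (maximum norm) budget constraint. -/
theorem cvar_constraint_iff_linfty (n ℓ : ℕ) (hn : 1 ≤ n) (hℓ : 1 ≤ ℓ)
    (π : (Fin n → ℝ) → ℝ) (hrange : ∀ a, π a ∈ Icc (0 : ℝ) 1)
    (C : ℝ → Set (Fin n → ℝ))
    (hcut : ∀ lam : ℝ, 0 < lam → C lam = {a | lam ≤ π a})
    (hsupp : C 0 = closure {a | 0 < π a})
    (ahat : Fin n → ℝ) (hnorm : π ahat = 1)
    (hcont : ContinuousOn π (C 0))
    (hcompact : IsCompact (C 0))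
    (hclosed : ∀ lam ∈ Icc (0 : ℝ) 1, IsClosed (C lam))
    (hconvex : ∀ lam ∈ Icc (0 : ℝ) 1, Convex ℝ (C lam))
    (hint : ∀ lam ∈ Ico (0 : ℝ) 1, (interior (C lam)).Nonempty)
    -- the cuts have the box-plus-`L_∞`-ball form
    (lo hi : Fin (ℓ + 1) → Fin n → ℝ) (d : Fin (ℓ + 1) → ℝ)
    (hlo : ∀ i j, lo i j ≤ ahat j) (hhi : ∀ i j, ahat j ≤ hi i j) (hd : ∀ i, 0 ≤ d i)
    (hform : ∀ i : Fin (ℓ + 1),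
      C (((i : ℕ) : ℝ) / ℓ) =
        {a | (∀ j, lo i j ≤ a j ∧ a j ≤ hi i j) ∧ (∀ j, |a j - ahat j| ≤ d i)})
    (ε : ℝ) (hε : ε ∈ Ico (0 : ℝ) 1) (b : ℝ) (x : Fin n → ℝ) :
    (∀ P ∈ ambiguitySet n ℓ C, cvar P ε (fun a => ∑ j, a j * x j) ≤ b)
    ↔ ∃ (w t : ℝ) (v : Fin (ℓ + 1) → ℝ)
        (α β φ ξ γ : Fin (ℓ + 1) → Fin n → ℝ),
        (∀ i, 0 ≤ v i) ∧
        (∀ i j, 0 ≤ α i j) ∧ (∀ i j, 0 ≤ β i j) ∧ (∀ i j, 0 ≤ φ i j) ∧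
        (∀ i j, 0 ≤ ξ i j) ∧ (∀ i j, 0 ≤ γ i j) ∧
        w + ∑ i : Fin (ℓ + 1), (((i : ℕ) : ℝ) / ℓ - 1) * v i ≤ (b - t) * (1 - ε) ∧
        (∀ i : Fin (ℓ + 1), 0 ≤ w - ∑ j ∈ Finset.Iic i, v j) ∧
        (∀ i : Fin (ℓ + 1),
          ∑ j, hi i j * α i j - ∑ j, lo i j * β i j + ∑ j, ahat j * (φ i j - ξ i j)
            + d i * ∑ j, γ i j ≤ w - ∑ j ∈ Finset.Iic i, v j + t) ∧
        (∀ i j, α i j - β i j + φ i j - ξ i j = x j) ∧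
        (∀ i j, 0 ≤ γ i j - φ i j - ξ i j) := by
  classical
  have hε0 : (0:ℝ) ≤ ε := hε.1
  have hε1 : ε < 1 := hε.2
  have h1ε : (0:ℝ) < 1 - ε := by linarith
  have hr1 : (1:ℝ) ≤ 1 / (1 - ε) := by rw [le_div_iff₀ h1ε]; linarith
  have hr0 : (0:ℝ) ≤ 1 / (1 - ε) := by linarith
  have hℓ0 : (0:ℝ) < (ℓ:ℝ) := by exact_mod_cast hℓ
  have hlam_mem : ∀ i : Fin (ℓ+1), ((i:ℕ):ℝ)/ℓ ∈ Icc (0:ℝ) 1 := by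
    intro i
    have hi : (i:ℕ) ≤ ℓ := Nat.lt_succ_iff.mp i.2
    constructor
    · positivity
    · rw [div_le_one hℓ0]; exact_mod_cast hi
  have hCmeas : ∀ i : Fin (ℓ+1), MeasurableSet (C (((i:ℕ):ℝ)/ℓ)) :=
    fun i => (hclosed _ (hlam_mem i)).measurableSet
  have hzero : ((((0:Fin (ℓ+1)):ℕ):ℝ)/ℓ) = 0 := by simp
  have hnested : ∀ i k : Fin (ℓ+1), i ≤ k →
      C (((k:ℕ):ℝ)/ℓ) ⊆ C (((i:ℕ):ℝ)/ℓ) := by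
    intro i k hik
    have hik' : (i:ℕ) ≤ (k:ℕ) := hik
    rcases Nat.eq_zero_or_pos (i:ℕ) with hi0 | hi0
    · have hi0' : (((i:ℕ):ℝ)/ℓ) = 0 := by rw [hi0]; simp
      rw [hi0', hsupp]
      rcases Nat.eq_zero_or_pos (k:ℕ) with hk0 | hk0
      · have hk0' : (((k:ℕ):ℝ)/ℓ) = 0 := by rw [hk0]; simp
        rw [hk0', hsupp]
      · have hkpos : 0 < ((k:ℕ):ℝ)/ℓ := by
          apply div_pos _ hℓ0; exact_mod_cast hk0
        rw [hcut _ hkpos]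
        intro a ha
        exact subset_closure (lt_of_lt_of_le hkpos ha)
    · have hipos : 0 < ((i:ℕ):ℝ)/ℓ := by
        apply div_pos _ hℓ0; exact_mod_cast hi0
      have hkpos : 0 < ((k:ℕ):ℝ)/ℓ := by
        apply div_pos _ hℓ0; exact_mod_cast (lt_of_lt_of_le hi0 hik')
      rw [hcut _ hipos, hcut _ hkpos]
      intro a ha
      simp only [Set.mem_setOf_eq] at ha ⊢
      refine le_trans ?_ ha
      gcongr
  have hastar_mem : ∀ i : Fin (ℓ+1), astr lo hi d ahat x i ∈ C (((i:ℕ):ℝ)/ℓ) := by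
    intro i
    rw [hform i]
    exact astr_mem_box hlo hhi hd i
  have hMmax : ∀ i : Fin (ℓ+1), ∀ a ∈ C (((i:ℕ):ℝ)/ℓ),
      ∑ j, a j * x j ≤ Mv lo hi d ahat x i := by
    intro i a ha
    rw [hform i] at ha
    exact box_max hlo hhi hd i a ha.1 ha.2
  have hXcont : Continuous (fun a : Fin n → ℝ => ∑ j, a j * x j) :=
    continuous_finset_sum _ fun j _ => (continuous_apply j).mul continuous_const
  have hXmeas : Measurable (fun a : Fin n → ℝ => ∑ j, a j * x j) := hXcont.measurable
  constructor
  · -- forward direction: construct the dual certificate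
    intro hall
    set asf : ℕ → (Fin n → ℝ) := fun i => astr lo hi d ahat x (clp ℓ i) with hasf
    set m : ℕ → ℝ := fun i => Mv lo hi d ahat x (clp ℓ i) with hm
    have hℓE0 : ((ℓ:ℝ≥0∞)) ≠ 0 := by
      simp only [ne_eq, Nat.cast_eq_zero]; omega
    have hℓET : ((ℓ:ℝ≥0∞)) ≠ ⊤ := ENNReal.natCast_ne_top ℓ
    set Ps : Measure (Fin n → ℝ) :=
      ((ℓ:ℝ≥0∞))⁻¹ • ∑ i ∈ Finset.range ℓ, Measure.dirac (asf i) with hPs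
    have hPsuniv : Ps Set.univ = 1 := by
      rw [hPs, Measure.smul_apply, Measure.finset_sum_apply]
      simp only [Measure.dirac_apply' _ MeasurableSet.univ, Set.indicator_univ,
        Pi.one_apply, Finset.sum_const, Finset.card_range, nsmul_eq_mul, mul_one,
        smul_eq_mul]
      exact ENNReal.inv_mul_cancel hℓE0 hℓET
    have hPsprob : IsProbabilityMeasure Ps := ⟨hPsuniv⟩
    have hPsmem : Ps ∈ ambiguitySet n ℓ C := by
      refine ⟨hPsprob, fun k => ?_⟩
      have hkle : (k:ℕ) ≤ ℓ := Nat.lt_succ_iff.mp k.2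
      have happ : Ps (C (((k:ℕ):ℝ)/ℓ))
          = (ℓ:ℝ≥0∞)⁻¹ * ∑ i ∈ Finset.range ℓ,
              (C (((k:ℕ):ℝ)/ℓ)).indicator 1 (asf i) := by
        rw [hPs, Measure.smul_apply, Measure.finset_sum_apply, smul_eq_mul]
        congr 1
        exact Finset.sum_congr rfl fun i _ => Measure.dirac_apply' _ (hCmeas k)
      have hsub : Finset.Ico (k:ℕ) ℓ ⊆ Finset.range ℓ := fun i hi =>
        Finset.mem_range.mpr (Finset.mem_Ico.mp hi).2
      have hterm : ∀ i ∈ Finset.Ico (k:ℕ) ℓ,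
          (C (((k:ℕ):ℝ)/ℓ)).indicator (1 : (Fin n → ℝ) → ℝ≥0∞) (asf i) = 1 := by
        intro i hi
        obtain ⟨hi1, hi2⟩ := Finset.mem_Ico.mp hi
        have hklei : k ≤ clp ℓ i := by
          simp only [clp, Fin.le_def]
          omega
        have : asf i ∈ C (((k:ℕ):ℝ)/ℓ) :=
          hnested k (clp ℓ i) hklei (hastar_mem (clp ℓ i))
        simp [Set.indicator_of_mem this]
      have h2 : ∑ i ∈ Finset.Ico (k:ℕ) ℓ,
          (C (((k:ℕ):ℝ)/ℓ)).indicator (1 : (Fin n → ℝ) → ℝ≥0∞) (asf i)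
            = ((ℓ - (k:ℕ) : ℕ) : ℝ≥0∞) := by
        rw [Finset.sum_congr rfl hterm]
        simp [Nat.card_Ico]
      have h1 : ((ℓ - (k:ℕ) : ℕ) : ℝ≥0∞)
          ≤ ∑ i ∈ Finset.range ℓ, (C (((k:ℕ):ℝ)/ℓ)).indicator 1 (asf i) := by
        rw [← h2]
        exact Finset.sum_le_sum_of_subset hsub
      have heq : ENNReal.ofReal (1 - ((k:ℕ):ℝ)/ℓ)
          = ((ℓ - (k:ℕ) : ℕ) : ℝ≥0∞) / (ℓ:ℝ≥0∞) := by
        have h3 : (1:ℝ) - ((k:ℕ):ℝ)/ℓ = (((ℓ - (k:ℕ) : ℕ)):ℝ)/(ℓ:ℝ) := by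
          rw [Nat.cast_sub hkle]
          field_simp
        rw [h3, ENNReal.ofReal_div_of_pos hℓ0, ENNReal.ofReal_natCast,
          ENNReal.ofReal_natCast]
      rw [happ, heq, ENNReal.div_eq_inv_mul]
      exact mul_le_mul_right h1 _
    have hcb := hall Ps hPsmem
    have hsm : ∀ t : ℝ, StronglyMeasurable
        (fun a : Fin n → ℝ => max ((∑ j, a j * x j) - t) 0) := fun t =>
      ((hXcont.sub continuous_const).max continuous_const).stronglyMeasurable
    have hintPs : ∀ t : ℝ, ∫ a, max ((∑ j, a j * x j) - t) 0 ∂Ps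
        = (ℓ:ℝ)⁻¹ * ∑ i ∈ Finset.range ℓ, max (m i - t) 0 := by
      intro t
      rw [hPs, integral_smul_measure,
        integral_finset_sum_measure (fun i _ => integrable_dirac_sm (hsm t) (asf i))]
      have : ∀ i ∈ Finset.range ℓ,
          ∫ a, max ((∑ j, a j * x j) - t) 0 ∂(Measure.dirac (asf i))
            = max (m i - t) 0 := by
        intro i _
        rw [integral_dirac' _ _ (hsm t)]
        rfl
      rw [Finset.sum_congr rfl this, ENNReal.toReal_inv, ENNReal.toReal_natCast,
        smul_eq_mul]
    obtain ⟨ts, hts⟩ := exists_min_psi ℓ hℓ (1/(1-ε)) hr1 m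
    have hpsib : ts + 1/(1-ε) * ((ℓ:ℝ)⁻¹ * ∑ i ∈ Finset.range ℓ, max (m i - ts) 0)
        ≤ b := by
      refine le_trans ?_ hcb
      unfold cvar
      apply le_ciInf
      intro t
      rw [hintPs t]
      exact hts t
    have hCsum : (ℓ:ℝ)⁻¹ * ∑ i ∈ Finset.range ℓ, max (m i - ts) 0
        ≤ (b - ts) * (1 - ε) := by
      set S := (ℓ:ℝ)⁻¹ * ∑ i ∈ Finset.range ℓ, max (m i - ts) 0 with hSdef
      have hble : 1/(1-ε) * S ≤ b - ts := by linarith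
      calc S = (1 - ε) * (1/(1-ε) * S) := by field_simp
        _ ≤ (1 - ε) * (b - ts) := by
            exact mul_le_mul_of_nonneg_left hble (by linarith)
        _ = (b - ts) * (1 - ε) := by ring
    -- the certificate
    set Cc : ℕ → ℝ := fun i => max (m i - ts) 0 with hCc
    set Vv : ℕ → ℝ := fun i => if i = 0 then 0 else Cc (i-1) - Cc i with hVv
    have hmant : ∀ p q : ℕ, p ≤ q → m q ≤ m p := by
      intro p q hpq
      have hle : clp ℓ p ≤ clp ℓ q := by
        simp only [clp, Fin.le_def]
        omega
      exact hMmax (clp ℓ p) _ (hnested _ _ hle (hastar_mem (clp ℓ q)))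
    have hCant : ∀ p q : ℕ, p ≤ q → Cc q ≤ Cc p := by
      intro p q hpq
      exact max_le_max (by have := hmant p q hpq; linarith) le_rfl
    have hVnn : ∀ i : ℕ, 0 ≤ Vv i := by
      intro i
      simp only [hVv]
      split_ifs with h
      · exact le_rfl
      · have := hCant (i-1) i (by omega); linarith
    have htel : ∀ k : ℕ, ∑ j ∈ Finset.range (k+1), Vv j = Cc 0 - Cc k := by
      refine telescope_aux Cc Vv (fun i => ?_) (by simp [hVv])
      simp [hVv]
    have hIic : ∀ i : Fin (ℓ+1), ∑ j ∈ Finset.Iic i, Vv (j:ℕ) = Cc 0 - Cc (i:ℕ) := by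
      intro i
      have hile : (i:ℕ) ≤ ℓ := Nat.lt_succ_iff.mp i.2
      rw [sum_Iic_fin (fun j => Vv (j:ℕ)) i]
      rw [← htel (i:ℕ)]
      refine Finset.sum_congr rfl fun j hj => ?_
      have : j ≤ ℓ := by
        have := Finset.mem_range.mp hj; omega
      rw [clp_val this]
    have hdnn := fun (i : Fin (ℓ+1)) (j : Fin n) => @dual_nonneg n ℓ lo hi d ahat x i j
    have hdf := fun (i : Fin (ℓ+1)) (j : Fin n) => @dual_feas n ℓ lo hi d ahat x i j
    have hdo := fun (i : Fin (ℓ+1)) => @dual_obj n ℓ lo hi d ahat x i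
    refine ⟨Cc 0, ts, fun i => Vv (i:ℕ),
      fun i => dA hi d ahat x i, fun i => dB lo d ahat x i,
      fun i => dPhi hi d ahat x i, fun i => dXi lo d ahat x i,
      fun i j => dPhi hi d ahat x i j + dXi lo d ahat x i j,
      fun i => hVnn (i:ℕ),
      fun i j => (hdnn i j).1, fun i j => (hdnn i j).2.2.1,
      fun i j => (hdnn i j).2.1, fun i j => (hdnn i j).2.2.2,
      fun i j => add_nonneg (hdnn i j).2.1 (hdnn i j).2.2.2,
      ?_, ?_, ?_, fun i j => hdf i j, fun i j => by simp⟩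
    · -- first scalar constraint
      have habel := abel_aux (Cc 0) Vv ℓ
      have hlhs : ∑ i ∈ Finset.range ℓ, (Cc 0 - ∑ j ∈ Finset.range (i+1), Vv j)
          = ∑ i ∈ Finset.range ℓ, Cc i := by
        refine Finset.sum_congr rfl fun i _ => ?_
        rw [htel i]; ring
      rw [hlhs] at habel
      have hconv : ∑ i : Fin (ℓ+1), (((i:ℕ):ℝ)/ℓ - 1) * Vv (i:ℕ)
          = ∑ i ∈ Finset.range (ℓ+1), (((i:ℕ):ℝ)/ℓ - 1) * Vv i := by
        rw [sum_univ_clp (fun i : Fin (ℓ+1) => (((i:ℕ):ℝ)/ℓ - 1) * Vv (i:ℕ))]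
        refine Finset.sum_congr rfl fun i hi => ?_
        have : i ≤ ℓ := by have := Finset.mem_range.mp hi; omega
        rw [clp_val this]
      have hfact : ∀ i : ℕ, (((i:ℕ):ℝ)/ℓ - 1) = (ℓ:ℝ)⁻¹ * ((i:ℝ) - ℓ) := by
        intro i; field_simp
      have hconv2 : ∑ i ∈ Finset.range (ℓ+1), (((i:ℕ):ℝ)/ℓ - 1) * Vv i
          = (ℓ:ℝ)⁻¹ * ∑ i ∈ Finset.range (ℓ+1), ((i:ℝ) - ℓ) * Vv i := by
        rw [Finset.mul_sum]
        refine Finset.sum_congr rfl fun i _ => ?_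
        rw [hfact i]; ring
      rw [hconv, hconv2]
      have hnℓ : (ℓ:ℝ) ≠ 0 := ne_of_gt hℓ0
      have : Cc 0 + (ℓ:ℝ)⁻¹ * ∑ i ∈ Finset.range (ℓ+1), ((i:ℝ) - ℓ) * Vv i
          = (ℓ:ℝ)⁻¹ * ∑ i ∈ Finset.range ℓ, Cc i := by
        have h := habel
        field_simp at h ⊢
        linarith
      rw [this]
      exact hCsum
    · -- nonnegativity of the partial sums
      intro i
      rw [hIic i]
      have : 0 ≤ Cc (i:ℕ) := le_max_right _ _
      linarith
    · -- main dual inequality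
      intro i
      rw [hIic i]
      rw [hdo i]
      have hmi : m (i:ℕ) = Mv lo hi d ahat x i := by
        rw [hm]
        simp only [clp_fst]
      have h1 : Mv lo hi d ahat x i - ts ≤ Cc (i:ℕ) := by
        rw [hCc]
        simp only []
        rw [hmi]
        exact le_max_left _ _
      linarith
  · -- reverse direction: weak duality
    rintro ⟨w, t, v, α, β, φ, ξ, γ, hv, hα, hβ, hφ, hξ, hγ, h1, h2, h3, h4, h5⟩ P hP
    obtain ⟨hPprob, hPcut⟩ := hP
    haveI := hPprob
    have hPC0 : P (C 0) = 1 := by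
      have h := hPcut 0
      rw [hzero] at h
      simp only [Fin.val_zero, Nat.cast_zero, zero_div, sub_zero, ENNReal.ofReal_one] at h
      exact le_antisymm prob_le_one h
    have hC0m : MeasurableSet (C 0) := by
      have := hCmeas 0; rwa [hzero] at this
    have hae : ∀ᵐ a ∂P, a ∈ C 0 := by
      rw [MeasureTheory.ae_iff]
      have hset : {a : Fin n → ℝ | ¬ a ∈ C 0} = (C 0)ᶜ := rfl
      rw [hset, measure_compl hC0m (measure_ne_top _ _), measure_univ, hPC0, tsub_self]
    obtain ⟨R, hR⟩ := hcompact.exists_bound_of_continuousOn hXcont.continuousOn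
    have haeB : ∀ᵐ a ∂P, ‖∑ j, a j * x j‖ ≤ R := hae.mono fun a ha => hR a ha
    have hIX : Integrable (fun a => ∑ j, a j * x j) P :=
      Integrable.mono' (integrable_const R) hXcont.aestronglyMeasurable haeB
    have hIg : ∀ s : ℝ, Integrable (fun a => max ((∑ j, a j * x j) - s) 0) P := by
      intro s
      refine Integrable.mono' (hIX.abs.add (integrable_const |s|))
        ((hXmeas.sub measurable_const).max measurable_const).aestronglyMeasurable ?_
      refine Filter.Eventually.of_forall fun a => ?_
      simp only [Pi.add_apply]
      rw [Real.norm_eq_abs, abs_of_nonneg (le_max_right _ _)]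
      apply max_le
      · have h1 := le_abs_self (∑ j, a j * x j)
        have h2 := neg_abs_le s
        linarith
      · positivity
    have hlb : ∀ s : ℝ, (∫ a, (∑ j, a j * x j) ∂P)
        ≤ s + 1/(1-ε) * ∫ a, max ((∑ j, a j * x j) - s) 0 ∂P := by
      intro s
      have hg0 : 0 ≤ ∫ a, max ((∑ j, a j * x j) - s) 0 ∂P :=
        integral_nonneg fun a => le_max_right _ _
      have hrg0 : 0 ≤ 1/(1-ε) * ∫ a, max ((∑ j, a j * x j) - s) 0 ∂P :=
        mul_nonneg hr0 hg0
      rcases le_total (∫ a, (∑ j, a j * x j) ∂P) s with h | h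
      · linarith
      · have heq : ∫ a, ((∑ j, a j * x j) - s) ∂P
            = (∫ a, (∑ j, a j * x j) ∂P) - s := by
          rw [integral_sub hIX (integrable_const s), integral_const]
          simp [measure_univ]
        have hmono : (∫ a, (∑ j, a j * x j) ∂P) - s
            ≤ ∫ a, max ((∑ j, a j * x j) - s) 0 ∂P := by
          rw [← heq]
          exact integral_mono (hIX.sub (integrable_const s)) (hIg s)
            fun a => le_max_left _ _
        nlinarith
    have hbdd : BddBelow (Set.range fun s : ℝ =>
        s + 1/(1-ε) * ∫ a, max ((∑ j, a j * x j) - s) 0 ∂P) := by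
      refine ⟨∫ a, (∑ j, a j * x j) ∂P, ?_⟩
      rintro y ⟨s, rfl⟩
      exact hlb s
    set hfun : (Fin n → ℝ) → ℝ := fun a =>
      w - ∑ i : Fin (ℓ+1), v i * Set.indicator (C (((i:ℕ):ℝ)/ℓ)) (fun _ => (1:ℝ)) a
      with hhf
    have hIterm : ∀ i : Fin (ℓ+1), Integrable (fun a =>
        v i * Set.indicator (C (((i:ℕ):ℝ)/ℓ)) (fun _ => (1:ℝ)) a) P :=
      fun i => ((integrable_const (1:ℝ)).indicator (hCmeas i)).const_mul (v i)
    have hIh : Integrable hfun P :=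
      (integrable_const w).sub (integrable_finset_sum _ fun i _ => hIterm i)
    have hptw : ∀ a ∈ C 0, max ((∑ j, a j * x j) - t) 0 ≤ hfun a := by
      intro a ha
      have h0S : a ∈ C ((((0:Fin (ℓ+1)):ℕ):ℝ)/ℓ) := by rw [hzero]; exact ha
      set S : Finset (Fin (ℓ+1)) :=
        Finset.univ.filter (fun i : Fin (ℓ+1) => a ∈ C (((i:ℕ):ℝ)/ℓ)) with hS
      have hSne : S.Nonempty := ⟨0, Finset.mem_filter.mpr ⟨Finset.mem_univ 0, h0S⟩⟩
      set k := S.max' hSne with hk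
      have hkmem : a ∈ C (((k:ℕ):ℝ)/ℓ) := by
        have := S.max'_mem hSne
        simp only [hS, Finset.mem_filter] at this
        exact this.2
      have hiff : ∀ i : Fin (ℓ+1), a ∈ C (((i:ℕ):ℝ)/ℓ) ↔ i ≤ k := by
        intro i
        constructor
        · intro h
          exact S.le_max' i (Finset.mem_filter.mpr ⟨Finset.mem_univ i, h⟩)
        · intro h
          exact hnested i k h hkmem
      have hSeq : S = Finset.Iic k := by
        rw [hS]
        ext i
        simp only [Finset.mem_filter, Finset.mem_univ, true_and, Finset.mem_Iic]
        exact hiff i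
      have hind : ∑ i : Fin (ℓ+1),
          v i * Set.indicator (C (((i:ℕ):ℝ)/ℓ)) (fun _ => (1:ℝ)) a
            = ∑ i ∈ Finset.Iic k, v i := by
        rw [← hSeq, hS, Finset.sum_filter]
        refine Finset.sum_congr rfl fun i _ => ?_
        by_cases h : a ∈ C (((i:ℕ):ℝ)/ℓ)
        · simp [Set.indicator_of_mem h, h]
        · simp [Set.indicator_of_notMem h, h]
      have hha : hfun a = w - ∑ i ∈ Finset.Iic k, v i := by
        rw [hhf]; simp only []; rw [hind]
      rw [hha]
      apply max_le
      · rw [hform k] at hkmem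
        have hXa := weak_duality k a hkmem.1 hkmem.2 (hd k) (α k) (β k) (φ k) (ξ k)
          (γ k) (hα k) (hβ k) (hφ k) (hξ k) (hγ k) (h4 k) (h5 k)
        have := h3 k
        linarith
      · exact h2 k
    have haepw : ∀ᵐ a ∂P, max ((∑ j, a j * x j) - t) 0 ≤ hfun a :=
      hae.mono fun a ha => hptw a ha
    have hint1 : ∫ a, max ((∑ j, a j * x j) - t) 0 ∂P ≤ ∫ a, hfun a ∂P :=
      integral_mono_of_nonneg (Filter.Eventually.of_forall fun a => le_max_right _ _)
        hIh haepw
    have hinth : ∫ a, hfun a ∂P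
        = w - ∑ i : Fin (ℓ+1), v i * (P (C (((i:ℕ):ℝ)/ℓ))).toReal := by
      rw [hhf]
      simp only []
      rw [integral_sub (integrable_const w) (integrable_finset_sum _ fun i _ => hIterm i),
        integral_const]
      rw [integral_finset_sum Finset.univ fun i _ => hIterm i]
      simp only [measureReal_def, measure_univ, ENNReal.toReal_one, one_smul]
      congr 1
      refine Finset.sum_congr rfl fun i _ => ?_
      rw [integral_const_mul, integral_indicator_const (1:ℝ) (hCmeas i)]
      simp [smul_eq_mul, measureReal_def]
    have hPge : ∀ i : Fin (ℓ+1), 1 - ((i:ℕ):ℝ)/ℓ ≤ (P (C (((i:ℕ):ℝ)/ℓ))).toReal := by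
      intro i
      exact (ENNReal.ofReal_le_iff_le_toReal (measure_ne_top _ _)).mp (hPcut i)
    have hsum_le : ∫ a, hfun a ∂P
        ≤ w + ∑ i : Fin (ℓ+1), (((i:ℕ):ℝ)/ℓ - 1) * v i := by
      rw [hinth]
      have hterm : ∀ i ∈ (Finset.univ : Finset (Fin (ℓ+1))), (1 - ((i:ℕ):ℝ)/ℓ) * v i
          ≤ v i * (P (C (((i:ℕ):ℝ)/ℓ))).toReal := by
        intro i _
        rw [mul_comm]
        exact mul_le_mul_of_nonneg_left (hPge i) (hv i)
      have hsum := Finset.sum_le_sum hterm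
      have hneg : ∑ i : Fin (ℓ+1), (1 - ((i:ℕ):ℝ)/ℓ) * v i
          = - ∑ i : Fin (ℓ+1), (((i:ℕ):ℝ)/ℓ - 1) * v i := by
        rw [← Finset.sum_neg_distrib]
        exact Finset.sum_congr rfl fun i _ => by ring
      rw [hneg] at hsum
      linarith
    have hgb : ∫ a, max ((∑ j, a j * x j) - t) 0 ∂P ≤ (b - t) * (1 - ε) :=
      le_trans hint1 (le_trans hsum_le h1)
    unfold cvar
    apply ciInf_le_of_le hbdd t
    have hkey : 1/(1-ε) * ((b - t) * (1 - ε)) = b - t := by field_simp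
    have hmul : 1/(1-ε) * ∫ a, max ((∑ j, a j * x j) - t) 0 ∂P
        ≤ 1/(1-ε) * ((b - t) * (1 - ε)) := mul_le_mul_of_nonneg_left hgb hr0
    rw [hkey] at hmul
    have : (1:ℝ)/(1-ε) = 1/(1-ε) := rfl
    simp only [one_div] at hmul ⊢
    linarith
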